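/- The function PTSiLU is continuously differentiable on ℝ; its derivative is −(ln 2)·2^x for x < x̄_c and 1 − (ln 2)·2^{−x−1} for x > x̄_c, and both one-sided limits at x̄_c equal (1 − √(1+2(ln 2)²))/2. -/

import Mathlib

noncomputable section
open Real Filter

def sq2 : ℝ := Real.sqrt (1 + 2 * (Real.log 2) ^ 2)
def xbc : ℝ := Real.logb 2 ((sq2 - 1) / (2 * Real.log 2))
def Cb : ℝ := -sq2 / Real.log 2 - xbc
def PTSiLU (x : ℝ) : ℝ := if x < xbc then -(2:ℝ) ^ x else (2:ℝ) ^ (-x - 1) + x + Cb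
def SiLU (x : ℝ) : ℝ := x * Real.exp x / (1 + Real.exp x)

lemma log2_pos : 0 < Real.log 2 := Real.log_pos (by norm_num)

lemma sq2_sq : sq2 ^ 2 = 1 + 2 * (Real.log 2) ^ 2 :=
  Real.sq_sqrt (by positivity)

lemma sq2_gt_one : 1 < sq2 := by
  have h : (1:ℝ) < 1 + 2 * (Real.log 2) ^ 2 := by nlinarith [log2_pos]
  calc (1:ℝ) = Real.sqrt 1 := Real.sqrt_one.symm
    _ < sq2 := Real.sqrt_lt_sqrt (by norm_num) h

lemma rpow_xbc : (2:ℝ) ^ xbc = (sq2 - 1) / (2 * Real.log 2) :=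
  Real.rpow_logb (by norm_num) (by norm_num)
    (div_pos (by linarith [sq2_gt_one]) (by linarith [log2_pos]))

lemma rpow_xbc_pos : 0 < (2:ℝ) ^ xbc := Real.rpow_pos_of_pos (by norm_num) _

lemma rpow_neg_xbc : (2:ℝ) ^ (-xbc - 1) = 1 / (2 * (2:ℝ) ^ xbc) := by
  rw [show -xbc - 1 = -(xbc + 1) by ring, Real.rpow_neg (by norm_num),
    Real.rpow_add (by norm_num), Real.rpow_one]
  rw [one_div, mul_comm]

/-- Value match at the junction. -/
lemma val_match : -(2:ℝ) ^ xbc = (2:ℝ) ^ (-xbc - 1) + xbc + Cb := by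
  rw [rpow_neg_xbc, rpow_xbc, Cb]
  have hL := log2_pos
  have hs := sq2_gt_one
  have hsq := sq2_sq
  have h1 : sq2 - 1 ≠ 0 := by linarith
  have h2 : Real.log 2 ≠ 0 := ne_of_gt hL
  field_simp
  nlinarith [hsq, hL, hs]

/-- Derivative match at the junction. -/
lemma deriv_match : -(Real.log 2 * (2:ℝ) ^ xbc) = 1 - Real.log 2 * (2:ℝ) ^ (-xbc - 1) := by
  rw [rpow_neg_xbc, rpow_xbc]
  have hL := log2_pos
  have hs := sq2_gt_one
  have hsq := sq2_sq
  have h1 : sq2 - 1 ≠ 0 := by linarith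
  have h2 : Real.log 2 ≠ 0 := ne_of_gt hL
  field_simp
  nlinarith [hsq, hL, hs]

lemma deriv_val : -(Real.log 2 * (2:ℝ) ^ xbc) = (1 - sq2) / 2 := by
  rw [rpow_xbc]
  have hL := log2_pos
  field_simp
  ring

/-- The candidate derivative. -/
def Dp (x : ℝ) : ℝ :=
  if x ≤ xbc then -(Real.log 2 * (2:ℝ) ^ x) else 1 - Real.log 2 * (2:ℝ) ^ (-x - 1)

def Fp (x : ℝ) : ℝ := -(2:ℝ) ^ x
def Gp (x : ℝ) : ℝ := (2:ℝ) ^ (-x - 1) + x + Cb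

lemma hasDerivAt_Fp (x : ℝ) : HasDerivAt Fp (-(Real.log 2 * (2:ℝ) ^ x)) x := by
  have h := (Real.hasStrictDerivAt_const_rpow (by norm_num : (0:ℝ) < 2) x).hasDerivAt
  rw [show Fp = -fun y : ℝ => (2:ℝ) ^ y from funext fun y => rfl]
  simpa [mul_comm] using h.neg

lemma hasDerivAt_Gp (x : ℝ) : HasDerivAt Gp (1 - Real.log 2 * (2:ℝ) ^ (-x - 1)) x := by
  have hinner : HasDerivAt (fun x : ℝ => -x - 1) (-1) x := by
    simpa using ((hasDerivAt_id x).neg.sub_const 1)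
  have h := ((Real.hasStrictDerivAt_const_rpow (by norm_num : (0:ℝ) < 2)
    (-x - 1)).hasDerivAt).comp x hinner
  have h2 := (h.add (hasDerivAt_id x)).add_const Cb
  convert h2 using 1
  · rfl
  · rfl
  · rfl
  · ring

lemma continuous_rpow2 : Continuous fun x : ℝ => (2:ℝ) ^ x :=
  continuous_const.rpow continuous_id fun _ => Or.inl (by norm_num)

lemma cont_f' : Continuous fun x : ℝ => -(Real.log 2 * (2:ℝ) ^ x) :=
  (continuous_const.mul continuous_rpow2).neg

lemma cont_g' : Continuous fun x : ℝ => 1 - Real.log 2 * (2:ℝ) ^ (-x - 1) :=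
  continuous_const.sub (continuous_const.mul
    (continuous_rpow2.comp (continuous_id.neg.sub continuous_const)))

lemma continuous_Dp : Continuous Dp := by
  apply Continuous.if_le cont_f' cont_g' continuous_id continuous_const
  intro x hx
  subst hx
  exact deriv_match

lemma hasDerivAt_PTSiLU (x : ℝ) : HasDerivAt PTSiLU (Dp x) x := by
  rcases lt_trichotomy x xbc with h | h | h
  · have heq : PTSiLU =ᶠ[nhds x] Fp := by
      filter_upwards [Iio_mem_nhds h] with y hy
      simp only [PTSiLU, Fp]
      exact if_pos hy
    have : Dp x = -(Real.log 2 * (2:ℝ) ^ x) := if_pos h.le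
    rw [this]
    exact (hasDerivAt_Fp x).congr_of_eventuallyEq heq
  · subst h
    have hval : Dp xbc = -(Real.log 2 * (2:ℝ) ^ xbc) := if_pos le_rfl
    rw [hval]
    have hPF : Set.EqOn PTSiLU Fp (Set.Iic xbc) := by
      intro y hy
      rcases lt_or_eq_of_le (Set.mem_Iic.mp hy) with hlt | heq
      · simp only [PTSiLU, Fp]
        exact if_pos hlt
      · subst heq
        simp only [PTSiLU, Fp]
        rw [if_neg (lt_irrefl xbc)]
        exact val_match.symm
    have hPG : Set.EqOn PTSiLU Gp (Set.Ici xbc) := by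
      intro y hy
      have hny : ¬ y < xbc := not_lt.mpr hy
      simp only [PTSiLU, Gp]
      exact if_neg hny
    have h1 : HasDerivWithinAt PTSiLU (-(Real.log 2 * (2:ℝ) ^ xbc)) (Set.Iic xbc) xbc := by
      refine ((hasDerivAt_Fp xbc).hasDerivWithinAt).congr hPF ?_
      exact hPF Set.self_mem_Iic
    have h2 : HasDerivWithinAt PTSiLU (-(Real.log 2 * (2:ℝ) ^ xbc)) (Set.Ici xbc) xbc := by
      have h := ((hasDerivAt_Gp xbc).hasDerivWithinAt).congr hPG (hPG Set.self_mem_Ici)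
      rw [deriv_match]
      exact h
    have hu := h1.union h2
    rw [Set.Iic_union_Ici] at hu
    exact hasDerivWithinAt_univ.mp hu
  · have heq : PTSiLU =ᶠ[nhds x] Gp := by
      filter_upwards [Ioi_mem_nhds h] with y hy
      have : ¬ y < xbc := not_lt.mpr (le_of_lt hy)
      simp only [PTSiLU, Gp]
      exact if_neg this
    have : Dp x = 1 - Real.log 2 * (2:ℝ) ^ (-x - 1) := if_neg (not_le.mpr h)
    rw [this]
    exact (hasDerivAt_Gp x).congr_of_eventuallyEq heq

lemma deriv_PTSiLU_eq : deriv PTSiLU = Dp :=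
  funext fun x => (hasDerivAt_PTSiLU x).deriv

theorem ptsilu_contDiff :
    Differentiable ℝ PTSiLU ∧ Continuous (deriv PTSiLU) ∧
    (∀ x : ℝ, x < xbc → deriv PTSiLU x = -(Real.log 2 * (2:ℝ) ^ x)) ∧
    (∀ x : ℝ, xbc < x → deriv PTSiLU x = 1 - Real.log 2 * (2:ℝ) ^ (-x - 1)) ∧
    Tendsto (deriv PTSiLU) (nhdsWithin xbc (Set.Iio xbc)) (nhds ((1 - sq2) / 2)) ∧
    Tendsto (deriv PTSiLU) (nhdsWithin xbc (Set.Ioi xbc)) (nhds ((1 - sq2) / 2)) := by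
  have hDxbc : Dp xbc = (1 - sq2) / 2 := by
    rw [Dp, if_pos le_rfl, deriv_val]
  have htend : Tendsto (deriv PTSiLU) (nhds xbc) (nhds ((1 - sq2) / 2)) := by
    rw [deriv_PTSiLU_eq, ← hDxbc]
    exact continuous_Dp.tendsto xbc
  refine ⟨fun x => (hasDerivAt_PTSiLU x).differentiableAt,
    deriv_PTSiLU_eq ▸ continuous_Dp, ?_, ?_, ?_, ?_⟩
  · intro x hx
    rw [deriv_PTSiLU_eq, Dp, if_pos hx.le]
  · intro x hx
    rw [deriv_PTSiLU_eq, Dp, if_neg (not_le.mpr hx)]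
  · exact htend.mono_left nhdsWithin_le_nhds
  · exact htend.mono_left nhdsWithin_le_nhds
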